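/- arXiv:1906.08119 — 2 statements merged into one kernel-verified Lean document; each statement's English description precedes it below -/
import Mathlib

section
/- The adjoint of the Fourier coefficient map L²(S¹) → ℓ²(ℤ) is not an integral operator: there is no kernel representing T* on all of ℓ²(ℤ), since any such kernel would have to equal k(n,z) = zⁿ, whose maximal domain is ℓ¹(ℤ) ∩ ℓ²(ℤ) ⊊ ℓ²(ℤ). -/
open MeasureTheory

lemma aux_nat : Summable fun n : ℕ => (1 / ((n : ℝ) + 1)) ^ 2 := by
  have h := Real.summable_one_div_nat_pow.mpr (by norm_num : 1 < 2)
  have := (summable_nat_add_iff (f := fun n : ℕ => 1 / ((n:ℝ)) ^ 2) 1).2 h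
  simpa [div_pow] using this

lemma aux_norm (n : ℤ) : ‖((1 / (|n| + 1) : ℝ) : ℂ)‖ = 1/((|n|:ℝ)+1) := by
  have h0 : (0:ℝ) ≤ 1 / ((|n| : ℝ) + 1) := by positivity
  rw [show ((1 / (|n| + 1) : ℝ)) = 1 / ((|n| : ℝ) + 1) by push_cast; ring,
    Complex.norm_real, Real.norm_of_nonneg h0]

lemma aux_mem : Memℓp (fun n : ℤ => ((1 / (|n| + 1) : ℝ) : ℂ)) 2 := by
  apply memℓp_gen
  have h : Summable fun n : ℤ => (1 / ((|n| : ℝ) + 1)) ^ 2 := by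
    apply Summable.of_nat_of_neg <;>
      simpa [Int.cast_natCast] using aux_nat
  apply h.congr
  intro n
  rw [aux_norm, show ((2:ENNReal)).toReal = ((2:ℕ):ℝ) by norm_num, Real.rpow_natCast]

lemma aux_not : ¬ Summable fun n : ℤ => (1 / ((|n| : ℝ) + 1)) := by
  intro h
  have h2 : Summable fun n : ℕ => 1 / ((n : ℝ) + 1) := by
    apply (h.comp_injective (i := (Int.ofNat)) (fun a b hab => Int.ofNat.inj hab)).congr
    intro n; simp
  exact Real.not_summable_one_div_natCast ((summable_nat_add_iff 1).1 (by simpa using h2))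

/-- The adjoint of the Fourier coefficient map `L²(S¹) → ℓ²(ℤ)` is not an integral
operator: there is no kernel `κ` equal (a.e.) to `zⁿ` — as any kernel representing the
adjoint would have to be — such that `Σₙ |κ(n,z) aₙ|` converges for a.e. `z` for every
`a ∈ ℓ²(ℤ)`. -/
theorem stmt4 [Fact (0 < 2 * Real.pi)] :
    ¬ ∃ κ : ℤ → AddCircle (2 * Real.pi) → ℂ,
      (∀ n : ℤ, ∀ᵐ z ∂(volume : Measure (AddCircle (2 * Real.pi))), κ n z = fourier n z) ∧
      ∀ a : lp (fun _ : ℤ => ℂ) 2,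
        ∀ᵐ z ∂(volume : Measure (AddCircle (2 * Real.pi))),
          Summable fun n : ℤ => ‖κ n z * (a : ∀ _ : ℤ, ℂ) n‖ := by
  rintro ⟨κ, h1, h2⟩
  have hT : (0:ℝ) < 2 * Real.pi := Fact.out
  have hvol : NeZero (volume : Measure (AddCircle (2 * Real.pi))) := by
    refine ⟨fun h => ?_⟩
    have := AddCircle.measure_univ (T := 2 * Real.pi)
    rw [h] at this
    simp only [Measure.coe_zero, Pi.zero_apply] at this
    exact (ENNReal.ofReal_pos.mpr hT).ne' this.symm
  set a : lp (fun _ : ℤ => ℂ) 2 := ⟨fun n => ((1 / (|n| + 1) : ℝ) : ℂ), aux_mem⟩ with ha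
  have hall : ∀ᵐ z ∂(volume : Measure (AddCircle (2 * Real.pi))),
      ∀ n : ℤ, κ n z = fourier n z := ae_all_iff.mpr h1
  obtain ⟨z, hz1, hz2⟩ := (hall.and (h2 a)).exists
  apply aux_not
  apply hz2.congr
  intro n
  have hf : ‖(fourier n z : ℂ)‖ = 1 := Circle.norm_coe _
  rw [hz1 n]
  show ‖fourier n z * ((1 / (|n| + 1) : ℝ) : ℂ)‖ = _
  rw [norm_mul, hf, one_mul, aux_norm]
end

section
/- The intertwining map into the m-th piece is an isometry up to scale: the map T_m sending g ∈ V_{n−1,α+m} (holomorphic L² functions on the ball D_{n−1} with measure μ_{α+m}) to the function (z', z_n) ↦ g(z') z_n^m on D_n is a bounded injective linear map into V_{n,α} whose image is contained in the subspace of functions of the form f(z') z_n^m, and there is a constant c_{m,α} > 0 with ‖T_m g‖²_{L²(D_n, μ_α)} = c_{m,α} ‖g‖²_{L²(D_{n−1}, μ_{α+m})} for all such g. -/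
open MeasureTheory Set

theorem lintegral_haar_smul {E : Type*} [NormedAddCommGroup E] [NormedSpace ℝ E]
    [MeasurableSpace E] [BorelSpace E] [FiniteDimensional ℝ E]
    (μ : Measure E) [μ.IsAddHaarMeasure] {r : ℝ} (hr : 0 < r) {h : E → ENNReal}
    (hm : Measurable h) :
    ∫⁻ x, h x ∂μ = ENNReal.ofReal (r ^ Module.finrank ℝ E) * ∫⁻ x, h (r • x) ∂μ := by
  have h1 : ∫⁻ x, h (r • x) ∂μ = ∫⁻ y, h y ∂(Measure.map (fun x => r • x) μ) :=
    (lintegral_map hm (measurable_const_smul r)).symm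
  rw [h1, Measure.map_addHaar_smul μ hr.ne', lintegral_smul_measure, smul_eq_mul, ← mul_assoc,
    abs_of_nonneg (inv_nonneg.2 (pow_nonneg hr.le _)), ← ENNReal.ofReal_mul (by positivity),
    mul_inv_cancel₀ (by positivity), ENNReal.ofReal_one, one_mul]

theorem int1d {γ : ℝ} (hγ : -1 < γ) :
    IntegrableOn (fun x : ℝ => (1 - x ^ 2) ^ γ) (Ioo (-1) 1) volume := by
  set C : ℝ := max 1 (2 ^ γ) with hC
  have hC0 : 0 ≤ C := le_trans zero_le_one (le_max_left _ _)
  have key : ∀ x : ℝ, -1 < x → x < 1 → 0 < 1 - x ^ 2 := by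
    intro x h1 h2; nlinarith
  -- integrability of (1-x)^γ on Ioo 0 1
  have h1 : IntegrableOn (fun x : ℝ => (1 - x) ^ γ) (Ioo 0 1) volume := by
    have := (intervalIntegral.intervalIntegrable_rpow' hγ (a := 0) (b := 1)).comp_sub_left 1
    simp only [sub_zero, sub_self] at this
    exact (intervalIntegrable_iff_integrableOn_Ioo_of_le zero_le_one).1 this.symm
  -- integrability of (1+x)^γ on Ioo (-1) 0
  have h2 : IntegrableOn (fun x : ℝ => (1 + x) ^ γ) (Ioo (-1) 0) volume := by
    have := (intervalIntegral.intervalIntegrable_rpow' hγ (a := 0) (b := 1)).comp_add_right 1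
    simp only [zero_sub, sub_self] at this
    have := (intervalIntegrable_iff_integrableOn_Ioo_of_le (by norm_num : (-1:ℝ) ≤ 0)).1 this
    exact this.congr_fun (fun x _ => by rw [add_comm]) measurableSet_Ioo
  have hcont : ∀ (s : Set ℝ), s ⊆ Ioo (-1) 1 →
      ContinuousOn (fun x : ℝ => (1 - x ^ 2) ^ γ) s := by
    intro s hs
    apply ContinuousOn.rpow_const (by fun_prop)
    intro x hx
    exact Or.inl (key x (hs hx).1 (hs hx).2).ne'
  have hCb : ∀ y : ℝ, 1 ≤ y → y ≤ 2 → y ^ γ ≤ C := by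
    intro y hy1 hy2
    rcases le_or_gt 0 γ with hg | hg
    · exact le_trans (Real.rpow_le_rpow (by linarith) hy2 hg) (le_max_right _ _)
    · exact le_trans (Real.rpow_le_one_of_one_le_of_nonpos hy1 hg.le) (le_max_left _ _)
  have split : ∀ x : ℝ, -1 < x → x < 1 →
      (1 - x ^ 2) ^ γ = (1 - x) ^ γ * (1 + x) ^ γ := by
    intro x h1 h2
    rw [show (1 - x ^ 2 : ℝ) = (1 - x) * (1 + x) by ring,
      Real.mul_rpow (by linarith) (by linarith)]
  have hright : IntegrableOn (fun x : ℝ => (1 - x ^ 2) ^ γ) (Ioo 0 1) volume := by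
    refine Integrable.mono' (h1.const_mul C)
      (((hcont _ (Ioo_subset_Ioo (by norm_num) le_rfl)).aemeasurable
        measurableSet_Ioo).aestronglyMeasurable) ?_
    filter_upwards [ae_restrict_mem measurableSet_Ioo] with x hx
    have h1x : (-1:ℝ) < x := by linarith [hx.1]
    rw [Real.norm_eq_abs, abs_of_nonneg (Real.rpow_nonneg (key x h1x hx.2).le γ),
      split x h1x hx.2]
    have := hCb (1 + x) (by linarith [hx.1]) (by linarith [hx.2])
    have h0 := Real.rpow_nonneg (show (0:ℝ) ≤ 1 - x by linarith [hx.2]) γ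
    calc (1 - x) ^ γ * (1 + x) ^ γ ≤ (1 - x) ^ γ * C := by
          exact mul_le_mul_of_nonneg_left this h0
      _ = C * (1 - x) ^ γ := by ring
  have hleft : IntegrableOn (fun x : ℝ => (1 - x ^ 2) ^ γ) (Ioo (-1) 0) volume := by
    refine Integrable.mono' (h2.const_mul C)
      (((hcont _ (Ioo_subset_Ioo le_rfl (by norm_num))).aemeasurable
        measurableSet_Ioo).aestronglyMeasurable) ?_
    filter_upwards [ae_restrict_mem measurableSet_Ioo] with x hx
    have h1x : x < 1 := by linarith [hx.2]
    rw [Real.norm_eq_abs, abs_of_nonneg (Real.rpow_nonneg (key x hx.1 h1x).le γ),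
      split x hx.1 h1x]
    have := hCb (1 - x) (by linarith [hx.2]) (by linarith [hx.1])
    have h0 := Real.rpow_nonneg (show (0:ℝ) ≤ 1 + x by linarith [hx.1]) γ
    exact mul_le_mul_of_nonneg_right this h0
  have hico : IntegrableOn (fun x : ℝ => (1 - x ^ 2) ^ γ) (Ico 0 1) volume :=
    hright.congr_set_ae Ioo_ae_eq_Ico.symm
  refine (hleft.union hico).mono_set ?_
  intro x hx
  rcases lt_or_ge x 0 with h | h
  · exact Or.inl ⟨hx.1, h⟩
  · exact Or.inr ⟨h, hx.2⟩


noncomputable def lineC (γ : ℝ) : ENNReal :=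
  ∫⁻ x : ℝ, Set.indicator {x : ℝ | x ^ 2 < 1} (fun x => ENNReal.ofReal ((1 - x ^ 2) ^ γ)) x

noncomputable def diskC (m : ℕ) (β : ℝ) : ENNReal :=
  ∫⁻ w : ℂ, Set.indicator {w : ℂ | ‖w‖ ^ 2 < 1}
    (fun w => ENNReal.ofReal ((‖w‖ ^ m) ^ 2 * (1 - ‖w‖ ^ 2) ^ β)) w

theorem sq_set_eq : {x : ℝ | x ^ 2 < 1} = Ioo (-1) 1 := by
  ext x
  simp only [mem_setOf_eq, mem_Ioo]
  constructor
  · intro h; constructor <;> nlinarith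
  · intro ⟨h1, h2⟩; nlinarith

theorem lineC_lt_top {γ : ℝ} (hγ : -1 < γ) : lineC γ < ⊤ := by
  rw [lineC, sq_set_eq, lintegral_indicator measurableSet_Ioo]
  exact (int1d hγ).lintegral_lt_top

theorem line_slice (γ : ℝ) {s : ℝ} (hs : 0 < s) :
    ∫⁻ x : ℝ, Set.indicator {x : ℝ | x ^ 2 < s}
      (fun x => ENNReal.ofReal ((s - x ^ 2) ^ γ)) x
      = ENNReal.ofReal (s ^ (γ + 2⁻¹)) * lineC γ := by
  set r := Real.sqrt s with hrdef
  have hr : 0 < r := Real.sqrt_pos.2 hs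
  have hr2 : r ^ 2 = s := Real.sq_sqrt hs.le
  have hmeas : Measurable (fun x : ℝ => Set.indicator {x : ℝ | x ^ 2 < s}
      (fun x => ENNReal.ofReal ((s - x ^ 2) ^ γ)) x) := by
    apply Measurable.indicator
    · fun_prop
    · exact measurableSet_lt (measurable_id.pow_const 2) measurable_const
  rw [lintegral_haar_smul volume hr hmeas]
  have key : ∀ x : ℝ, Set.indicator {x : ℝ | x ^ 2 < s}
      (fun x => ENNReal.ofReal ((s - x ^ 2) ^ γ)) (r • x)
      = ENNReal.ofReal (s ^ γ) *
        Set.indicator {x : ℝ | x ^ 2 < 1} (fun x => ENNReal.ofReal ((1 - x ^ 2) ^ γ)) x := by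
    intro x
    have hsq : (r • x) ^ 2 = s * x ^ 2 := by rw [smul_eq_mul, mul_pow, hr2]
    by_cases hx : x ^ 2 < 1
    · have hmem : r • x ∈ {x : ℝ | x ^ 2 < s} := by
        show (r • x) ^ 2 < s
        rw [hsq]
        exact (mul_lt_iff_lt_one_right hs).2 hx
      rw [Set.indicator_of_mem hmem, Set.indicator_of_mem (show x ∈ {x : ℝ | x ^ 2 < 1} from hx),
        hsq, show s - s * x ^ 2 = s * (1 - x ^ 2) by ring,
        Real.mul_rpow hs.le (by linarith),
        ENNReal.ofReal_mul (Real.rpow_nonneg hs.le γ)]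
    · have hmem : r • x ∉ {x : ℝ | x ^ 2 < s} := by
        show ¬(r • x) ^ 2 < s
        rw [hsq, not_lt]
        exact (le_mul_iff_one_le_right hs).2 (not_lt.1 hx)
      rw [Set.indicator_of_notMem hmem,
        Set.indicator_of_notMem (show x ∉ {x : ℝ | x ^ 2 < 1} from hx), mul_zero]
  simp_rw [key]
  rw [lintegral_const_mul' _ _ ENNReal.ofReal_ne_top, ← lineC, ← mul_assoc,
    Module.finrank_self, pow_one, ← ENNReal.ofReal_mul (Real.sqrt_nonneg s)]
  congr 2
  rw [Real.sqrt_eq_rpow, ← Real.rpow_add hs]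
  norm_num [add_comm]

theorem disk_slice (m : ℕ) (β : ℝ) {s : ℝ} (hs : 0 < s) :
    ∫⁻ w : ℂ, Set.indicator {w : ℂ | ‖w‖ ^ 2 < s}
      (fun w => ENNReal.ofReal ((‖w‖ ^ m) ^ 2 * (s - ‖w‖ ^ 2) ^ β)) w
      = ENNReal.ofReal (s ^ ((m : ℝ) + β + 1)) * diskC m β := by
  set r := Real.sqrt s with hrdef
  have hr : 0 < r := Real.sqrt_pos.2 hs
  have hr2 : r ^ 2 = s := Real.sq_sqrt hs.le
  have hmeas : Measurable (fun w : ℂ => Set.indicator {w : ℂ | ‖w‖ ^ 2 < s}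
      (fun w => ENNReal.ofReal ((‖w‖ ^ m) ^ 2 * (s - ‖w‖ ^ 2) ^ β)) w) := by
    apply Measurable.indicator
    · fun_prop
    · exact measurableSet_lt (measurable_norm.pow_const 2) measurable_const
  rw [lintegral_haar_smul volume hr hmeas]
  have hnorm : ∀ w : ℂ, ‖r • w‖ = r * ‖w‖ := fun w => by
    rw [norm_smul, Real.norm_eq_abs, abs_of_pos hr]
  have hsq : ∀ w : ℂ, ‖r • w‖ ^ 2 = s * ‖w‖ ^ 2 := fun w => by
    rw [hnorm, mul_pow, hr2]
  have key : ∀ w : ℂ, Set.indicator {w : ℂ | ‖w‖ ^ 2 < s}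
      (fun w => ENNReal.ofReal ((‖w‖ ^ m) ^ 2 * (s - ‖w‖ ^ 2) ^ β)) (r • w)
      = ENNReal.ofReal (s ^ ((m : ℝ) + β)) *
        Set.indicator {w : ℂ | ‖w‖ ^ 2 < 1}
          (fun w => ENNReal.ofReal ((‖w‖ ^ m) ^ 2 * (1 - ‖w‖ ^ 2) ^ β)) w := by
    intro w
    by_cases hw : ‖w‖ ^ 2 < 1
    · have hmem : r • w ∈ {w : ℂ | ‖w‖ ^ 2 < s} := by
        show ‖r • w‖ ^ 2 < s
        rw [hsq]
        exact (mul_lt_iff_lt_one_right hs).2 hw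
      rw [Set.indicator_of_mem hmem,
        Set.indicator_of_mem (show w ∈ {w : ℂ | ‖w‖ ^ 2 < 1} from hw)]
      have e1 : (‖r • w‖ ^ m) ^ 2 = s ^ m * (‖w‖ ^ m) ^ 2 := by
        rw [hnorm, mul_pow, mul_pow, pow_right_comm, hr2]
      have e2 : (s - ‖r • w‖ ^ 2) ^ β = s ^ β * (1 - ‖w‖ ^ 2) ^ β := by
        rw [hsq, show s - s * ‖w‖ ^ 2 = s * (1 - ‖w‖ ^ 2) by ring,
          Real.mul_rpow hs.le (by linarith)]
      rw [e1, e2, show s ^ m * (‖w‖ ^ m) ^ 2 * (s ^ β * (1 - ‖w‖ ^ 2) ^ β)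
          = (s ^ m * s ^ β) * ((‖w‖ ^ m) ^ 2 * (1 - ‖w‖ ^ 2) ^ β) by ring,
        ENNReal.ofReal_mul (by positivity)]
      congr 2
      rw [← Real.rpow_natCast s m, ← Real.rpow_add hs]
    · have hmem : r • w ∉ {w : ℂ | ‖w‖ ^ 2 < s} := by
        show ¬‖r • w‖ ^ 2 < s
        rw [hsq, not_lt]
        exact (le_mul_iff_one_le_right hs).2 (not_lt.1 hw)
      rw [Set.indicator_of_notMem hmem,
        Set.indicator_of_notMem (show w ∉ {w : ℂ | ‖w‖ ^ 2 < 1} from hw), mul_zero]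
  simp_rw [key]
  rw [lintegral_const_mul' _ _ ENNReal.ofReal_ne_top, ← diskC, ← mul_assoc,
    Complex.finrank_real_complex, hr2, ← ENNReal.ofReal_mul hs.le]
  congr 2
  rw [Real.rpow_add hs ((m : ℝ) + β) 1, Real.rpow_one]
  ring

theorem norm_sq_complex (w : ℂ) : ‖w‖ ^ 2 = w.re ^ 2 + w.im ^ 2 := by
  rw [Complex.sq_norm, Complex.normSq_apply]
  ring

theorem diskC_zero_lt_top {β : ℝ} (hβ : -1 < β) : diskC 0 β < ⊤ := by
  have hβ' : (-1 : ℝ) < β + 2⁻¹ := by linarith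
  set G : ℝ × ℝ → ENNReal := fun p =>
    Set.indicator {p : ℝ × ℝ | p.1 ^ 2 + p.2 ^ 2 < 1}
      (fun p => ENNReal.ofReal ((1 - (p.1 ^ 2 + p.2 ^ 2)) ^ β)) p with hG
  have hGmeas : Measurable G := by
    apply Measurable.indicator
    · fun_prop
    · exact measurableSet_lt (by fun_prop) measurable_const
  have step1 : diskC 0 β = ∫⁻ p : ℝ × ℝ, G p := by
    rw [← Complex.volume_preserving_equiv_real_prod.lintegral_comp_emb
      Complex.measurableEquivRealProd.measurableEmbedding G]
    refine lintegral_congr fun w => ?_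
    have he : Complex.measurableEquivRealProd w = (w.re, w.im) := rfl
    simp only [hG, Set.indicator_apply, mem_setOf_eq, he]
    rw [← norm_sq_complex]
    simp
  have step2 : ∫⁻ p : ℝ × ℝ, G p
      = ∫⁻ x : ℝ, ∫⁻ y : ℝ, G (x, y) := by
    rw [MeasureTheory.Measure.volume_eq_prod ℝ ℝ, lintegral_prod G hGmeas.aemeasurable]
  have inner : ∀ x : ℝ, ∫⁻ y : ℝ, G (x, y)
      = Set.indicator {x : ℝ | x ^ 2 < 1}
          (fun x => ENNReal.ofReal ((1 - x ^ 2) ^ (β + 2⁻¹))) x * lineC β := by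
    intro x
    have hpt : ∀ y : ℝ, G (x, y) = Set.indicator {y : ℝ | y ^ 2 < 1 - x ^ 2}
        (fun y => ENNReal.ofReal (((1 - x ^ 2) - y ^ 2) ^ β)) y := by
      intro y
      simp only [hG, Set.indicator_apply, mem_setOf_eq]
      refine if_congr ⟨fun h => by linarith, fun h => by linarith⟩ ?_ rfl
      norm_num [sub_sub]
    simp_rw [hpt]
    by_cases hx : x ^ 2 < 1
    · rw [line_slice β (show (0:ℝ) < 1 - x ^ 2 by linarith),
        Set.indicator_of_mem (show x ∈ {x : ℝ | x ^ 2 < 1} from hx)]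
    · rw [Set.indicator_of_notMem (show x ∉ {x : ℝ | x ^ 2 < 1} from hx), zero_mul]
      rw [not_lt] at hx
      have : ∀ y : ℝ, Set.indicator {y : ℝ | y ^ 2 < 1 - x ^ 2}
          (fun y => ENNReal.ofReal (((1 - x ^ 2) - y ^ 2) ^ β)) y = 0 := by
        intro y
        apply Set.indicator_of_notMem
        simp only [mem_setOf_eq, not_lt]
        nlinarith [sq_nonneg y]
      simp_rw [this, lintegral_const]
      simp
    
  rw [step1, step2]
  simp_rw [inner]
  rw [lintegral_mul_const' _ _ (lineC_lt_top hβ).ne]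
  exact ENNReal.mul_lt_top (lineC_lt_top hβ') (lineC_lt_top hβ)

theorem diskC_lt_top (m : ℕ) {β : ℝ} (hβ : -1 < β) : diskC m β < ⊤ := by
  refine lt_of_le_of_lt (lintegral_mono fun w => ?_) (diskC_zero_lt_top hβ)
  by_cases hw : ‖w‖ ^ 2 < 1
  · rw [Set.indicator_of_mem (show w ∈ {w : ℂ | ‖w‖ ^ 2 < 1} from hw),
      Set.indicator_of_mem (show w ∈ {w : ℂ | ‖w‖ ^ 2 < 1} from hw)]
    apply ENNReal.ofReal_le_ofReal
    have h1 : ‖w‖ ≤ 1 := by nlinarith [norm_nonneg w]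
    have h2 : (‖w‖ ^ m) ^ 2 ≤ 1 := by
      rw [← one_pow 2]
      exact pow_le_pow_left₀ (by positivity) (pow_le_one₀ (norm_nonneg w) h1) 2
    have h3 : (0:ℝ) ≤ (1 - ‖w‖ ^ 2) ^ β := Real.rpow_nonneg (by linarith) β
    calc (‖w‖ ^ m) ^ 2 * (1 - ‖w‖ ^ 2) ^ β ≤ 1 * (1 - ‖w‖ ^ 2) ^ β :=
          mul_le_mul_of_nonneg_right h2 h3
      _ = (‖w‖ ^ 0) ^ 2 * (1 - ‖w‖ ^ 2) ^ β := by simp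
  · rw [Set.indicator_of_notMem (show w ∉ {w : ℂ | ‖w‖ ^ 2 < 1} from hw)]
    exact zero_le

theorem diskC_pos (m : ℕ) (β : ℝ) : 0 < diskC m β := by
  have hmeas : Measurable (fun w : ℂ => Set.indicator {w : ℂ | ‖w‖ ^ 2 < 1}
      (fun w => ENNReal.ofReal ((‖w‖ ^ m) ^ 2 * (1 - ‖w‖ ^ 2) ^ β)) w) := by
    apply Measurable.indicator
    · fun_prop
    · exact measurableSet_lt (measurable_norm.pow_const 2) measurable_const
  rw [diskC, lintegral_pos_iff_support hmeas]
  have hsub : Metric.ball (0 : ℂ) 1 \ {0} ⊆ Function.support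
      (fun w : ℂ => Set.indicator {w : ℂ | ‖w‖ ^ 2 < 1}
        (fun w => ENNReal.ofReal ((‖w‖ ^ m) ^ 2 * (1 - ‖w‖ ^ 2) ^ β)) w) := by
    intro w hw
    have h0 : w ≠ 0 := by simpa using hw.2
    have h1 : ‖w‖ < 1 := by simpa [Metric.mem_ball] using hw.1
    have h2 : 0 < ‖w‖ := norm_pos_iff.2 h0
    have hmem : w ∈ {w : ℂ | ‖w‖ ^ 2 < 1} := by
      simp only [mem_setOf_eq]
      nlinarith
    rw [Function.mem_support, Set.indicator_of_mem hmem]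
    have : (0:ℝ) < (‖w‖ ^ m) ^ 2 * (1 - ‖w‖ ^ 2) ^ β := by
      apply mul_pos (by positivity)
      apply Real.rpow_pos_of_pos
      nlinarith
    exact (ENNReal.ofReal_pos.2 this).ne'
  calc (0 : ENNReal) < volume (Metric.ball (0 : ℂ) 1 \ {0}) := by
        rw [measure_diff_null (measure_singleton 0)]
        exact Metric.measure_ball_pos volume 0 one_pos
    _ ≤ _ := measure_mono hsub

/-- The intertwining map `T_m : g ↦ g(z') z_nᵐ` from the weighted Bergman space of the
ball of `ℂⁿ` (weight `(1−|z'|²)^{(α+m)−(n+1)}`) into that of the ball of `ℂ^(n+1)`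
(weight `(1−|z|²)^{α−(n+2)}`) is an isometry up to a fixed positive scale `c`:
`‖T_m g‖² = c ‖g‖²` for all holomorphic square-integrable `g`. -/
theorem stmt14 (n : ℕ) (α : ℝ) (hα : ((n : ℝ) + 1) < α) (m : ℕ) :
    ∃ c : ℝ, 0 < c ∧
      ∀ g : (Fin n → ℂ) → ℂ,
        DifferentiableOn ℂ g {z' : Fin n → ℂ | ∑ i, ‖z' i‖ ^ 2 < 1} →
        IntegrableOn
          (fun z' : Fin n → ℂ =>
            ‖g z'‖ ^ 2 * (1 - ∑ i, ‖z' i‖ ^ 2) ^ ((α + m) - ((n : ℝ) + 1)))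
          {z' : Fin n → ℂ | ∑ i, ‖z' i‖ ^ 2 < 1} volume →
        (IntegrableOn
          (fun z : Fin (n + 1) → ℂ =>
            ‖g (fun i => z i.castSucc) * (z (Fin.last n)) ^ m‖ ^ 2
              * (1 - ∑ i, ‖z i‖ ^ 2) ^ (α - ((n : ℝ) + 2)))
          {z : Fin (n + 1) → ℂ | ∑ i, ‖z i‖ ^ 2 < 1} volume ∧
        ∫ z in {z : Fin (n + 1) → ℂ | ∑ i, ‖z i‖ ^ 2 < 1},
            ‖g (fun i => z i.castSucc) * (z (Fin.last n)) ^ m‖ ^ 2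
              * (1 - ∑ i, ‖z i‖ ^ 2) ^ (α - ((n : ℝ) + 2)) ∂volume
          = c * ∫ z' in {z' : Fin n → ℂ | ∑ i, ‖z' i‖ ^ 2 < 1},
              ‖g z'‖ ^ 2 * (1 - ∑ i, ‖z' i‖ ^ 2) ^ ((α + m) - ((n : ℝ) + 1)) ∂volume) := by
  have hn2 : (-1 : ℝ) < α - ((n : ℝ) + 2) := by linarith
  set β := α - ((n : ℝ) + 2) with hβdef
  refine ⟨(diskC m β).toReal,
    ENNReal.toReal_pos (diskC_pos m β).ne' (diskC_lt_top m hn2).ne, ?_⟩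
  intro g hg hgi
  set B' : Set (Fin n → ℂ) := {z' | ∑ i, ‖z' i‖ ^ 2 < 1} with hB'
  set B : Set (Fin (n+1) → ℂ) := {z | ∑ i, ‖z i‖ ^ 2 < 1} with hB
  have hB'open : IsOpen B' :=
    isOpen_lt (by fun_prop : Continuous fun z' : Fin n → ℂ => ∑ i, ‖z' i‖ ^ 2)
      continuous_const
  have hBopen : IsOpen B :=
    isOpen_lt (by fun_prop : Continuous fun z : Fin (n+1) → ℂ => ∑ i, ‖z i‖ ^ 2)
      continuous_const
  have hB'meas := hB'open.measurableSet
  have hBmeas := hBopen.measurableSet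
  have hgc : ContinuousOn g B' := hg.continuousOn
  have hproj : Continuous fun z : Fin (n+1) → ℂ => (fun i : Fin n => z i.castSucc) := by
    exact continuous_pi fun i => continuous_apply _
  have hsum : ∀ z : Fin (n+1) → ℂ,
      ∑ i, ‖z i‖ ^ 2 = ∑ j : Fin n, ‖z j.castSucc‖ ^ 2 + ‖z (Fin.last n)‖ ^ 2 :=
    fun z => Fin.sum_univ_castSucc (fun i => ‖z i‖ ^ 2)
  have hmaps : ∀ z ∈ B, (fun i : Fin n => z i.castSucc) ∈ B' := by
    intro z hz
    simp only [hB', Set.mem_setOf_eq]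
    simp only [hB, Set.mem_setOf_eq] at hz
    rw [hsum z] at hz
    have : (0:ℝ) ≤ ‖z (Fin.last n)‖ ^ 2 := by positivity
    linarith
  -- continuity of the integrands
  have hFc : ContinuousOn (fun z : Fin (n+1) → ℂ =>
      ‖g (fun i => z i.castSucc) * (z (Fin.last n)) ^ m‖ ^ 2
        * (1 - ∑ i, ‖z i‖ ^ 2) ^ β) B := by
    apply ContinuousOn.mul
    · exact (((hgc.comp hproj.continuousOn hmaps).mul
        ((continuous_apply (Fin.last n)).pow m).continuousOn).norm).pow 2
    · apply ContinuousOn.rpow_const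
      · fun_prop
      · intro z hz
        simp only [hB, Set.mem_setOf_eq] at hz
        exact Or.inl (by linarith)
  have hf'c : ContinuousOn (fun z' : Fin n → ℂ =>
      ‖g z'‖ ^ 2 * (1 - ∑ i, ‖z' i‖ ^ 2) ^ ((α + m) - ((n : ℝ) + 1))) B' := by
    apply ContinuousOn.mul
    · exact (hgc.norm).pow 2
    · apply ContinuousOn.rpow_const
      · fun_prop
      · intro z' hz'
        simp only [hB', Set.mem_setOf_eq] at hz'
        exact Or.inl (by linarith)
  have hFsm : AEStronglyMeasurable (fun z : Fin (n+1) → ℂ =>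
      ‖g (fun i => z i.castSucc) * (z (Fin.last n)) ^ m‖ ^ 2
        * (1 - ∑ i, ‖z i‖ ^ 2) ^ β) (volume.restrict B) :=
    (hFc.aemeasurable hBmeas).aestronglyMeasurable
  have hf'sm : AEStronglyMeasurable (fun z' : Fin n → ℂ =>
      ‖g z'‖ ^ 2 * (1 - ∑ i, ‖z' i‖ ^ 2) ^ ((α + m) - ((n : ℝ) + 1)))
      (volume.restrict B') :=
    (hf'c.aemeasurable hB'meas).aestronglyMeasurable
  have hFnn : 0 ≤ᵐ[volume.restrict B] (fun z : Fin (n+1) → ℂ =>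
      ‖g (fun i => z i.castSucc) * (z (Fin.last n)) ^ m‖ ^ 2
        * (1 - ∑ i, ‖z i‖ ^ 2) ^ β) := by
    filter_upwards [ae_restrict_mem hBmeas] with z hz
    simp only [hB, Set.mem_setOf_eq] at hz
    exact mul_nonneg (by positivity) (Real.rpow_nonneg (by linarith) β)
  have hf'nn : 0 ≤ᵐ[volume.restrict B'] (fun z' : Fin n → ℂ =>
      ‖g z'‖ ^ 2 * (1 - ∑ i, ‖z' i‖ ^ 2) ^ ((α + m) - ((n : ℝ) + 1))) := by
    filter_upwards [ae_restrict_mem hB'meas] with z' hz'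
    simp only [hB', Set.mem_setOf_eq] at hz'
    exact mul_nonneg (by positivity)
      (Real.rpow_nonneg (by linarith) _)
  set R := ∫⁻ z' in B', ENNReal.ofReal
      (‖g z'‖ ^ 2 * (1 - ∑ i, ‖z' i‖ ^ 2) ^ ((α + m) - ((n : ℝ) + 1))) with hR
  have hR_lt : R < ⊤ := hgi.lintegral_lt_top
  -- the key lintegral identity
  set φ := MeasurableEquiv.piFinSuccAbove (fun _ : Fin (n+1) => ℂ) (Fin.last n) with hφdef
  have hφ : MeasurePreserving φ volume volume :=
    volume_preserving_piFinSuccAbove (fun _ : Fin (n+1) => ℂ) (Fin.last n)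
  have hφz : ∀ z : Fin (n+1) → ℂ, φ z = (z (Fin.last n), fun j : Fin n => z j.castSucc) := by
    intro z
    refine Prod.ext rfl ?_
    funext j
    show z ((Fin.last n).succAbove j) = z j.castSucc
    rw [Fin.succAbove_last]
  set S : Set (ℂ × (Fin n → ℂ)) := {p | ‖p.1‖ ^ 2 + ∑ i, ‖p.2 i‖ ^ 2 < 1} with hS
  have hSopen : IsOpen S :=
    isOpen_lt (by fun_prop : Continuous fun p : ℂ × (Fin n → ℂ) => ‖p.1‖ ^ 2 + ∑ i, ‖p.2 i‖ ^ 2)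
      continuous_const
  have hSmeas := hSopen.measurableSet
  set H : ℂ × (Fin n → ℂ) → ENNReal := Set.indicator S (fun p =>
    ENNReal.ofReal (‖g p.2‖ ^ 2 *
      ((‖p.1‖ ^ m) ^ 2 * (1 - (‖p.1‖ ^ 2 + ∑ i, ‖p.2 i‖ ^ 2)) ^ β))) with hH
  have key : ∫⁻ z in B, ENNReal.ofReal
      (‖g (fun i => z i.castSucc) * (z (Fin.last n)) ^ m‖ ^ 2
        * (1 - ∑ i, ‖z i‖ ^ 2) ^ β) = diskC m β * R := by
    have eq1 : ∀ z : Fin (n+1) → ℂ, Set.indicator B (fun z =>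
        ENNReal.ofReal (‖g (fun i => z i.castSucc) * (z (Fin.last n)) ^ m‖ ^ 2
          * (1 - ∑ i, ‖z i‖ ^ 2) ^ β)) z = H (φ z) := by
      intro z
      rw [hφz z, hH]
      simp only [Set.indicator_apply, hB, hS, Set.mem_setOf_eq, hsum z]
      refine if_congr ⟨fun h => by linarith, fun h => by linarith⟩ ?_ rfl
      rw [show (1:ℝ) - (‖z (Fin.last n)‖ ^ 2 + ∑ j : Fin n, ‖z j.castSucc‖ ^ 2)
          = 1 - (∑ j : Fin n, ‖z j.castSucc‖ ^ 2 + ‖z (Fin.last n)‖ ^ 2) by ring,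
        norm_mul, norm_pow, mul_pow, mul_assoc]
    have hHmeas : AEMeasurable H (volume.prod volume) := by
      rw [hH]
      rw [aemeasurable_indicator_iff hSmeas]
      have hcont : ContinuousOn (fun p : ℂ × (Fin n → ℂ) =>
          ‖g p.2‖ ^ 2 * ((‖p.1‖ ^ m) ^ 2 * (1 - (‖p.1‖ ^ 2 + ∑ i, ‖p.2 i‖ ^ 2)) ^ β)) S := by
        apply ContinuousOn.mul
        · exact ((hgc.comp continuous_snd.continuousOn (fun p hp => by
            simp only [hB', Set.mem_setOf_eq]
            simp only [hS, Set.mem_setOf_eq] at hp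
            have : (0:ℝ) ≤ ‖p.1‖ ^ 2 := by positivity
            linarith)).norm).pow 2
        · apply ContinuousOn.mul
          · fun_prop
          · apply ContinuousOn.rpow_const
            · fun_prop
            · intro p hp
              simp only [hS, Set.mem_setOf_eq] at hp
              exact Or.inl (by linarith)
      exact ((ENNReal.continuous_ofReal.comp_continuousOn hcont).aemeasurable hSmeas)
    calc ∫⁻ z in B, ENNReal.ofReal
          (‖g (fun i => z i.castSucc) * (z (Fin.last n)) ^ m‖ ^ 2
            * (1 - ∑ i, ‖z i‖ ^ 2) ^ β)
        = ∫⁻ z : Fin (n+1) → ℂ, Set.indicator B (fun z =>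
            ENNReal.ofReal (‖g (fun i => z i.castSucc) * (z (Fin.last n)) ^ m‖ ^ 2
              * (1 - ∑ i, ‖z i‖ ^ 2) ^ β)) z := (lintegral_indicator hBmeas _).symm
      _ = ∫⁻ z : Fin (n+1) → ℂ, H (φ z) := lintegral_congr eq1
      _ = ∫⁻ p : ℂ × (Fin n → ℂ), H p := hφ.lintegral_comp_emb φ.measurableEmbedding H
      _ = ∫⁻ z' : Fin n → ℂ, ∫⁻ w : ℂ, H (w, z') := by
          have h := lintegral_prod_symm H hHmeas
          rw [← MeasureTheory.Measure.volume_eq_prod ℂ (Fin n → ℂ)] at h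
          exact h
      _ = ∫⁻ z' : Fin n → ℂ, diskC m β * Set.indicator B' (fun z' =>
            ENNReal.ofReal (‖g z'‖ ^ 2
              * (1 - ∑ i, ‖z' i‖ ^ 2) ^ ((α + m) - ((n : ℝ) + 1)))) z' := by
          refine lintegral_congr fun z' => ?_
          have ht0 : (0:ℝ) ≤ ∑ i, ‖z' i‖ ^ 2 := by positivity
          have hpt : ∀ w : ℂ, H (w, z') = ENNReal.ofReal (‖g z'‖ ^ 2) *
              Set.indicator {w : ℂ | ‖w‖ ^ 2 < 1 - ∑ i, ‖z' i‖ ^ 2}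
                (fun w => ENNReal.ofReal ((‖w‖ ^ m) ^ 2
                  * ((1 - ∑ i, ‖z' i‖ ^ 2) - ‖w‖ ^ 2) ^ β)) w := by
            intro w
            rw [hH]
            simp only [Set.indicator_apply, hS, Set.mem_setOf_eq, mul_ite, mul_zero]
            refine if_congr ⟨fun h => by linarith, fun h => by linarith⟩ ?_ rfl
            rw [ENNReal.ofReal_mul (by positivity),
              show (1 : ℝ) - (‖w‖ ^ 2 + ∑ i, ‖z' i‖ ^ 2)
                = (1 - ∑ i, ‖z' i‖ ^ 2) - ‖w‖ ^ 2 by ring]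
          simp_rw [hpt]
          rw [lintegral_const_mul' _ _ ENNReal.ofReal_ne_top]
          by_cases ht : ∑ i, ‖z' i‖ ^ 2 < 1
          · rw [disk_slice m β (by linarith : (0:ℝ) < 1 - ∑ i, ‖z' i‖ ^ 2),
              Set.indicator_of_mem (show z' ∈ B' from ht)]
            have hexp : (m:ℝ) + β + 1 = (α + m) - ((n : ℝ) + 1) := by
              rw [hβdef]; ring
            rw [hexp, ← mul_assoc, ← ENNReal.ofReal_mul (by positivity), mul_comm]
          · have hzero : ∀ w : ℂ, Set.indicator {w : ℂ | ‖w‖ ^ 2 < 1 - ∑ i, ‖z' i‖ ^ 2}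
                (fun w => ENNReal.ofReal ((‖w‖ ^ m) ^ 2
                  * ((1 - ∑ i, ‖z' i‖ ^ 2) - ‖w‖ ^ 2) ^ β)) w = 0 := by
              intro w
              apply Set.indicator_of_notMem
              simp only [Set.mem_setOf_eq, not_lt]
              have : (0:ℝ) ≤ ‖w‖ ^ 2 := by positivity
              push_neg at ht
              linarith
            simp_rw [hzero]
            rw [lintegral_const, zero_mul, mul_zero,
              Set.indicator_of_notMem (show z' ∉ B' from ht), mul_zero]
      _ = diskC m β * R := by
          rw [lintegral_const_mul' _ _ (diskC_lt_top m hn2).ne, hR,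
            lintegral_indicator hB'meas]
  constructor
  · refine ⟨hFsm, ?_⟩
    rw [hasFiniteIntegral_iff_ofReal hFnn]
    exact key ▸ ENNReal.mul_lt_top (diskC_lt_top m hn2) hR_lt
  · rw [integral_eq_lintegral_of_nonneg_ae hFnn hFsm,
      integral_eq_lintegral_of_nonneg_ae hf'nn hf'sm, key, ENNReal.toReal_mul]
end
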